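/- Let A = (2/5)·e^{3/2} and B = 1/5. Let p ≥ 10^6 be a real number, h = ⌊A log p⌋ and r = ⌈B log p⌉. Then (2r / (e(h+1)))^r ≤ p^{-1/2}. -/

import Mathlib

lemma exp_lin_bound (y : ℝ) (h1 : 1/2 ≤ y) (h2 : y ≤ 1) :
    Real.exp (5/2 * y) ≤ Real.exp (5/2) * y := by
  have hadd : Real.exp (5/2 * y) * Real.exp (5/2 * (1 - y)) = Real.exp (5/2) := by
    rw [← Real.exp_add]; ring_nf
  have h3 := Real.add_one_le_exp (5/2 * (1 - y))
  have h4 := Real.exp_pos (5/2 * y)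
  nlinarith [mul_nonneg (sub_nonneg.2 h1) (sub_nonneg.2 h2),
    mul_pos h4 (lt_of_lt_of_le (by linarith) h1)]

theorem key_zpow_bound
    (p : ℝ) (hp : (10 : ℝ) ^ 6 ≤ p)
    (A B : ℝ) (hA : A = 2 / 5 * Real.exp (3 / 2)) (hB : B = 1 / 5)
    (h r : ℤ)
    (hh : h = ⌊A * Real.log p⌋) (hr : r = ⌈B * Real.log p⌉) :
    (2 * (r : ℝ) / (Real.exp 1 * ((h : ℝ) + 1))) ^ r ≤ p ^ (-(1 / 2) : ℝ) := by
  have hp0 : (0:ℝ) < p := lt_of_lt_of_le (by norm_num) hp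
  set L := Real.log p with hLdef
  have he0 : (0:ℝ) < Real.exp 1 := Real.exp_pos 1
  have hL5 : (5:ℝ) ≤ L := by
    rw [Real.le_log_iff_exp_le hp0]
    have h1 : Real.exp 5 = (Real.exp 1)^(5:ℕ) := by
      rw [← Real.exp_nat_mul]; norm_num
    calc Real.exp 5 ≤ (2.7182818286:ℝ)^(5:ℕ) := by
          rw [h1]; exact pow_le_pow_left₀ he0.le Real.exp_one_lt_d9.le 5
    _ ≤ (10:ℝ)^6 := by norm_num
    _ ≤ p := hp
  -- r bounds
  have hrL : L/5 ≤ (r:ℝ) := by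
    rw [hr, hB]
    have := Int.le_ceil (1/5 * L)
    linarith [this]
  have hrU : (r:ℝ) < L/5 + 1 := by
    rw [hr, hB]
    have := Int.ceil_lt_add_one (1/5 * L)
    push_cast at this ⊢
    linarith
  have hr1 : (1:ℝ) ≤ (r:ℝ) := by linarith
  -- h bounds
  have hAL : A * L ≤ (h:ℝ) + 1 := by
    rw [hh]
    have := Int.lt_floor_add_one (A * L)
    linarith
  have hA0 : 0 < A := by rw [hA]; positivity
  have hh1 : 0 < (h:ℝ) + 1 := lt_of_lt_of_le (by nlinarith) hAL
  -- natural exponent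
  have hr0 : (0:ℤ) ≤ r := by
    have : (0:ℝ) ≤ (r:ℝ) := by linarith
    exact_mod_cast this
  obtain ⟨n, rfl⟩ : ∃ n : ℕ, r = (n : ℤ) := ⟨r.toNat, (Int.toNat_of_nonneg hr0).symm⟩
  have hn0 : 0 < n := by exact_mod_cast lt_of_lt_of_le zero_lt_one (by exact_mod_cast hr1)
  rw [zpow_natCast]
  push_cast at hrL hrU hr1 ⊢
  have hnR : (0:ℝ) < (n:ℝ) := by positivity
  -- key chain
  set c : ℝ := Real.exp 1 * ((h:ℝ) + 1) / (2 * (n:ℝ)) with hc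
  have hc0 : 0 < c := by positivity
  have key : Real.exp (L / 2) ≤ c ^ n := by
    have e1 : Real.exp (L / 2) = (Real.exp (L / (2 * n))) ^ n := by
      rw [← Real.exp_nat_mul]
      congr 1
      field_simp
    rw [e1]
    apply pow_le_pow_left₀ (Real.exp_pos _).le
    set y : ℝ := L / (5 * n) with hy
    have hy1 : y ≤ 1 := by
      rw [hy, div_le_one (by positivity)]
      linarith
    have hy2 : 1/2 ≤ y := by
      rw [hy, le_div_iff₀ (by positivity)]
      nlinarith
    have e2 : L / (2 * n) = 5/2 * y := by rw [hy]; field_simp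
    rw [e2]
    calc Real.exp (5/2 * y) ≤ Real.exp (5/2) * y := exp_lin_bound y hy2 hy1
    _ = Real.exp 1 * Real.exp (3/2) * L / (5 * n) := by
        rw [hy, ← Real.exp_add]; norm_num; ring
    _ ≤ c := by
        rw [hc, div_le_div_iff₀ (by positivity) (by positivity)]
        have : Real.exp 1 * Real.exp (3/2) * L = Real.exp 1 * (5/2) * (A * L) := by
          rw [hA]; ring
        rw [this]
        have h2 : Real.exp 1 * (5/2) * (A * L) ≤ Real.exp 1 * (5/2) * ((h:ℝ)+1) := by
          apply mul_le_mul_of_nonneg_left hAL (by positivity)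
        nlinarith
  -- conclude
  have hb : 2 * (n:ℝ) / (Real.exp 1 * ((h:ℝ) + 1)) = c⁻¹ := by
    rw [hc]; field_simp
  rw [hb, Real.rpow_def_of_pos hp0, ← hLdef]
  rw [inv_pow]
  rw [inv_le_iff_one_le_mul₀ (by positivity)]
  have : Real.exp (L * -(1/2)) * Real.exp (L / 2) = 1 := by
    rw [← Real.exp_add]; ring_nf; exact Real.exp_zero
  calc (1:ℝ) = Real.exp (L * -(1/2)) * Real.exp (L / 2) := this.symm
  _ ≤ Real.exp (L * -(1/2)) * c ^ n := by
      apply mul_le_mul_of_nonneg_left key (Real.exp_pos _).le
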